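/- arXiv:math/0701536 — 2 statements merged into one kernel-verified Lean document; each statement's English description precedes it below -/
import Mathlib

section
/- Let a, b1, b2 > 0 and x, y ∈ [0,1). Then the double series B(a,b1+b2)·Σ_{k,n≥0} (a)_{k+n}(b1)_k(b2)_n x^k y^n/((a+b1+b2)_{k+n} k! n!) converges absolutely and equals the convergent improper integral ∫_0^∞ t^{a−1}(1+t)^{−a} (1+(1−x)t)^{−b1} (1+(1−y)t)^{−b2} dt. -/
open Real MeasureTheory

/-- Rising factorial (Pochhammer symbol) `(a)_k`. -/
noncomputable def poch (a : ℝ) (k : ℕ) : ℝ := (ascPochhammer ℝ k).eval a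

/-- Euler beta function `B(p,q) = Γ(p)Γ(q)/Γ(p+q)`. -/
noncomputable def eulerBeta (p q : ℝ) : ℝ := Real.Gamma p * Real.Gamma q / Real.Gamma (p + q)

/-- Digamma function `ψ(x) = Γ'(x)/Γ(x)`. -/
noncomputable def psi (x : ℝ) : ℝ := deriv Real.Gamma x / Real.Gamma x

/-- General term of the double series for `B(a,b₁+b₂)·F₁(a;b₁,b₂;a+b₁+b₂;x,y)`. -/
noncomputable def F1term (a b1 b2 x y : ℝ) (p : ℕ × ℕ) : ℝ :=
  poch a (p.1 + p.2) * poch b1 p.1 * poch b2 p.2 * x ^ p.1 * y ^ p.2 /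
    (poch (a + b1 + b2) (p.1 + p.2) * (Nat.factorial p.1 : ℝ) * (Nat.factorial p.2 : ℝ))

/-- `f_{a,b₁,b₂}(x,y) = B(a,b₁+b₂)·F₁(a;b₁,b₂;a+b₁+b₂;x,y)` as a double series. -/
noncomputable def f (a b1 b2 x y : ℝ) : ℝ :=
  eulerBeta a (b1 + b2) * ∑' p : ℕ × ℕ, F1term a b1 b2 x y p

/-- The approximation `g_{a,b₁,b₂}(x,y)`. -/
noncomputable def g (a b1 b2 x y : ℝ) : ℝ :=
  Real.log (1 / (1 - x)) + 2 * psi 1 - psi a - psi (b1 + b2) +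
    ∑' k : ℕ, poch b2 (k + 1) / ((k + 1 : ℝ) * poch (b1 + b2) (k + 1)) *
      ((y - x) / (1 - x)) ^ (k + 1)

section Aux


open Set Filter

lemma poch_zero' (b : ℝ) : poch b 0 = 1 := by simp [poch]

lemma poch_succ (b : ℝ) (k : ℕ) : poch b (k+1) = poch b k * (b + k) := by
  simp [poch, ascPochhammer_succ_eval]

lemma poch_pos {b : ℝ} (hb : 0 < b) (k : ℕ) : 0 < poch b k := by
  induction k with
  | zero => simp [poch_zero']
  | succ k ih => rw [poch_succ]; positivity

lemma poch_le {b c : ℝ} (hb : 0 < b) (hbc : b ≤ c) (k : ℕ) : poch b k ≤ poch c k := by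
  induction k with
  | zero => simp [poch_zero']
  | succ k ih =>
      rw [poch_succ, poch_succ]
      have h1 : (0:ℝ) ≤ b + k := by positivity
      exact mul_le_mul ih (by linarith) h1 ((poch_pos (lt_of_lt_of_le hb hbc) k).le)

lemma Gamma_poch {b : ℝ} (hb : 0 < b) (k : ℕ) :
    Real.Gamma (b + k) = poch b k * Real.Gamma b := by
  induction k with
  | zero => simp [poch_zero']
  | succ k ih =>
      have h : b + (k+1 : ℕ) = (b + k) + 1 := by push_cast; ring
      rw [h, Real.Gamma_add_one (by positivity), ih, poch_succ]; ring

lemma summable_poch {b z : ℝ} (hb : 0 < b) (hz0 : 0 ≤ z) (hz1 : z < 1) :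
    Summable (fun k : ℕ => poch b k * z ^ k / (Nat.factorial k)) := by
  set l : ℝ := (1 + z) / 2 with hl
  have hzl : z < l := by rw [hl]; linarith
  have hl1 : l < 1 := by rw [hl]; linarith
  have hl0 : 0 < l - z := by linarith
  apply summable_of_ratio_norm_eventually_le hl1
  obtain ⟨N, hN⟩ := exists_nat_ge (z * b / (l - z))
  filter_upwards [eventually_ge_atTop N] with k hk
  have hterm : poch b (k+1) * z ^ (k+1) / (Nat.factorial (k+1))
      = (poch b k * z ^ k / (Nat.factorial k)) * ((b + k) * z / (k+1)) := by
    rw [poch_succ, Nat.factorial_succ]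
    push_cast
    field_simp
    ring
  have hpos : (0:ℝ) ≤ poch b k * z ^ k / (Nat.factorial k) := by
    have := poch_pos hb k
    positivity
  have hratio : (b + k) * z / (k+1) ≤ l := by
    rw [div_le_iff₀ (by positivity)]
    have hkN : (N : ℝ) ≤ k := by exact_mod_cast hk
    have : z * b / (l - z) ≤ k := le_trans hN hkN
    rw [div_le_iff₀ hl0] at this
    nlinarith
  have hratio0 : 0 ≤ (b + k) * z / (k+1) := by positivity
  rw [Real.norm_eq_abs, Real.norm_eq_abs, hterm, abs_of_nonneg (mul_nonneg hpos hratio0),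
    abs_of_nonneg hpos]
  calc poch b k * z ^ k / (Nat.factorial k) * ((b + k) * z / (k+1))
      ≤ poch b k * z ^ k / (Nat.factorial k) * l := mul_le_mul_of_nonneg_left hratio hpos
    _ = l * (poch b k * z ^ k / (Nat.factorial k)) := by ring

lemma gammaScaledVal {b c : ℝ} (hb : 0 < b) (hc : 0 < c) :
    ∫ u in Ioi (0:ℝ), Real.exp (-(c*u)) * u ^ (b-1) = c ^ (-b) * Real.Gamma b := by
  have h1 := integral_comp_mul_left_Ioi (fun x : ℝ => Real.exp (-x) * x ^ (b-1)) 0 hc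
  rw [mul_zero, ← Real.Gamma_eq_integral hb] at h1
  have h2 : ∀ u ∈ Ioi (0:ℝ), Real.exp (-(c*u)) * (c*u) ^ (b-1)
      = c ^ (b-1) * (Real.exp (-(c*u)) * u ^ (b-1)) := by
    intro u hu
    rw [Real.mul_rpow hc.le (le_of_lt hu)]; ring
  rw [setIntegral_congr_fun measurableSet_Ioi (fun u hu => h2 u hu), integral_const_mul,
    smul_eq_mul] at h1
  have hcb : c ^ (b-1) ≠ 0 := by positivity
  have key : ∫ u in Ioi (0:ℝ), Real.exp (-(c*u)) * u ^ (b-1)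
      = c⁻¹ * Real.Gamma b / c ^ (b-1) := by
    rw [eq_div_iff hcb, mul_comm _ (c ^ (b-1)), h1]
  rw [key, Real.rpow_neg hc.le, Real.rpow_sub hc, Real.rpow_one]
  field_simp

lemma exp_tsum' (w : ℝ) : Real.exp w = ∑' n : ℕ, w ^ n / (Nat.factorial n) := by
  rw [Real.exp_eq_exp_ℝ, NormedSpace.exp_eq_tsum_div]

lemma hasSum_binomial {b z : ℝ} (hb : 0 < b) (hz0 : 0 ≤ z) (hz1 : z < 1) :
    HasSum (fun k : ℕ => poch b k * z ^ k / (Nat.factorial k)) ((1-z) ^ (-b)) := by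
  have h1z : 0 < 1 - z := by linarith
  have hG : 0 < Real.Gamma b := Real.Gamma_pos_of_pos hb
  set F : ℕ → ℝ → ℝ := fun k u => (z ^ k / (Nat.factorial k)) * (Real.exp (-u) * u ^ (b + k - 1))
    with hF
  have hint : ∀ k : ℕ, Integrable (F k) (volume.restrict (Ioi (0:ℝ))) := by
    intro k
    have : (0:ℝ) < b + k := by positivity
    exact (Real.GammaIntegral_convergent this).const_mul _
  have hval : ∀ k : ℕ, ∫ u in Ioi (0:ℝ), F k u
      = poch b k * z ^ k / (Nat.factorial k) * Real.Gamma b := by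
    intro k
    have hbk : (0:ℝ) < b + k := by positivity
    rw [hF]
    simp only
    rw [integral_const_mul, ← Real.Gamma_eq_integral hbk, Gamma_poch hb]
    ring
  have hnorm : ∀ k : ℕ, ∫ u in Ioi (0:ℝ), ‖F k u‖
      = poch b k * z ^ k / (Nat.factorial k) * Real.Gamma b := by
    intro k
    rw [← hval k]
    apply setIntegral_congr_fun measurableSet_Ioi
    intro u hu
    simp only [Set.mem_Ioi] at hu
    apply norm_of_nonneg
    have : (0:ℝ) ≤ u ^ (b + k - 1) := Real.rpow_nonneg hu.le _
    positivity
  have hsum : Summable (fun k : ℕ => ∫ u in Ioi (0:ℝ), ‖F k u‖) := by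
    simp_rw [hnorm]
    exact (summable_poch hb hz0 hz1).mul_right _
  have hswap := MeasureTheory.integral_tsum_of_summable_integral_norm hint hsum
  have hpt : ∀ u ∈ Ioi (0:ℝ), (∑' k : ℕ, F k u) = Real.exp (-((1-z)*u)) * u ^ (b - 1) := by
    intro u hu
    simp only [Set.mem_Ioi] at hu
    have hterm : ∀ k : ℕ, F k u
        = (Real.exp (-u) * u ^ (b-1)) * ((z*u) ^ k / (Nat.factorial k)) := by
      intro k
      rw [hF]
      simp only
      rw [show b + (k:ℝ) - 1 = (b - 1) + (k:ℝ) by ring, Real.rpow_add hu,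
        Real.rpow_natCast, mul_pow]
      ring
    rw [tsum_congr hterm, tsum_mul_left, ← exp_tsum',
      show rexp (-u) * u ^ (b - 1) * rexp (z * u) = (rexp (-u) * rexp (z*u)) * u ^ (b-1) by ring,
      ← Real.exp_add]
    congr 2
    ring
  rw [setIntegral_congr_fun measurableSet_Ioi hpt, gammaScaledVal hb h1z] at hswap
  simp_rw [hval] at hswap
  rw [tsum_mul_right] at hswap
  have htsum : (∑' k : ℕ, poch b k * z ^ k / (Nat.factorial k)) = (1-z) ^ (-b) := by
    field_simp at hswap
    linarith
  exact htsum ▸ (summable_poch hb hz0 hz1).hasSum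

lemma contOn_beta (c e : ℝ) : ContinuousOn (fun t : ℝ => t ^ (c-1) * (1+t) ^ (-e)) (Ioi (0:ℝ)) := by
  apply ContinuousOn.mul
  · exact continuousOn_id.rpow_const (fun x hx => Or.inl (ne_of_gt hx))
  · exact (continuousOn_const.add continuousOn_id).rpow_const
      (fun x hx => Or.inl (by simp only [Set.mem_Ioi] at hx; show (1:ℝ) + x ≠ 0; positivity))

lemma integrableOn_betaI {c q : ℝ} (hc : 0 < c) (hq : 0 < q) :
    IntegrableOn (fun t : ℝ => t ^ (c-1) * (1+t) ^ (-(c+q))) (Ioi (0:ℝ)) := by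
  rw [← Ioc_union_Ioi_eq_Ioi (zero_le_one (α := ℝ))]
  apply IntegrableOn.union
  · have hmaj : IntegrableOn (fun t : ℝ => t ^ (c-1)) (Ioc (0:ℝ) 1) :=
      (intervalIntegrable_iff_integrableOn_Ioc_of_le zero_le_one).mp
        (intervalIntegral.intervalIntegrable_rpow' (by linarith))
    apply Integrable.mono' hmaj
    · exact ((contOn_beta c (c+q)).mono Ioc_subset_Ioi_self).aestronglyMeasurable measurableSet_Ioc
    · filter_upwards [ae_restrict_mem measurableSet_Ioc] with t ht
      obtain ⟨ht0, ht1⟩ := ht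
      have h1 : (0:ℝ) ≤ t ^ (c-1) := Real.rpow_nonneg ht0.le _
      have h2 : (1+t) ^ (-(c+q)) ≤ 1 :=
        Real.rpow_le_one_of_one_le_of_nonpos (by linarith) (by linarith)
      have h3 : (0:ℝ) ≤ (1+t) ^ (-(c+q)) := Real.rpow_nonneg (by linarith) _
      rw [norm_of_nonneg (mul_nonneg h1 h3)]
      calc t ^ (c-1) * (1+t) ^ (-(c+q)) ≤ t ^ (c-1) * 1 := mul_le_mul_of_nonneg_left h2 h1
        _ = t ^ (c-1) := by ring
  · have hmaj : IntegrableOn (fun t : ℝ => t ^ (-1-q)) (Ioi (1:ℝ)) :=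
      integrableOn_Ioi_rpow_of_lt (by linarith) zero_lt_one
    apply Integrable.mono' hmaj
    · exact ((contOn_beta c (c+q)).mono (fun t (ht : t ∈ Ioi (1:ℝ)) => (Set.mem_Ioi.mpr (lt_trans zero_lt_one (Set.mem_Ioi.mp ht)) : t ∈ Ioi (0:ℝ)))).aestronglyMeasurable
        measurableSet_Ioi
    · filter_upwards [ae_restrict_mem measurableSet_Ioi] with t ht
      simp only [Set.mem_Ioi] at ht
      have ht0 : (0:ℝ) < t := lt_trans zero_lt_one ht
      have h1 : (0:ℝ) ≤ t ^ (c-1) := Real.rpow_nonneg ht0.le _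
      have h3 : (0:ℝ) ≤ (1+t) ^ (-(c+q)) := Real.rpow_nonneg (by linarith) _
      rw [norm_of_nonneg (mul_nonneg h1 h3)]
      have h2 : (1+t) ^ (-(c+q)) ≤ t ^ (-(c+q)) :=
        Real.rpow_le_rpow_of_nonpos ht0 (by linarith) (by linarith)
      calc t ^ (c-1) * (1+t) ^ (-(c+q)) ≤ t ^ (c-1) * t ^ (-(c+q)) :=
            mul_le_mul_of_nonneg_left h2 h1
        _ = t ^ (-1-q) := by rw [← Real.rpow_add ht0]; ring_nf

lemma integral_beta01 {p q : ℝ} (hp : 0 < p) (hq : 0 < q) :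
    ∫ u in Ioo (0:ℝ) 1, u ^ (p-1) * (1-u) ^ (q-1) = eulerBeta p q := by
  have hC := Complex.Gamma_mul_Gamma_eq_betaIntegral
    (s := (p:ℂ)) (t := (q:ℂ)) (by simpa using hp) (by simpa using hq)
  have hBeta : Complex.betaIntegral (p:ℂ) (q:ℂ)
      = ((∫ u in (0:ℝ)..1, u ^ (p-1) * (1-u) ^ (q-1) : ℝ) : ℂ) := by
    rw [Complex.betaIntegral, ← intervalIntegral.integral_ofReal]
    apply intervalIntegral.integral_congr
    intro x hx
    rw [Set.uIcc_of_le zero_le_one] at hx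
    obtain ⟨hx0, hx1⟩ := hx
    push_cast
    rw [show (p:ℂ) - 1 = ((p - 1 : ℝ) : ℂ) by push_cast; ring,
      show (q:ℂ) - 1 = ((q - 1 : ℝ) : ℂ) by push_cast; ring,
      show (1:ℂ) - (x:ℂ) = ((1 - x : ℝ) : ℂ) by push_cast; ring,
      Complex.ofReal_cpow hx0, Complex.ofReal_cpow (by linarith)]
  rw [hBeta, Complex.Gamma_ofReal, Complex.Gamma_ofReal, show (p:ℂ) + (q:ℂ) = ((p+q : ℝ):ℂ) by
    push_cast; ring, Complex.Gamma_ofReal, ← Complex.ofReal_mul, ← Complex.ofReal_mul] at hC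
  have hR : Real.Gamma p * Real.Gamma q
      = Real.Gamma (p+q) * ∫ u in (0:ℝ)..1, u ^ (p-1) * (1-u) ^ (q-1) := by
    exact_mod_cast hC
  have hGpq : Real.Gamma (p+q) ≠ 0 := (Real.Gamma_pos_of_pos (by linarith)).ne'
  rw [intervalIntegral.integral_of_le zero_le_one, integral_Ioc_eq_integral_Ioo] at hR
  rw [eulerBeta, hR]
  field_simp

lemma integral_betaIoi {c q : ℝ} (hc : 0 < c) (hq : 0 < q) :
    ∫ t in Ioi (0:ℝ), t ^ (c-1) * (1+t) ^ (-(c+q)) = eulerBeta c q := by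
  have himg : (fun u : ℝ => u / (1-u)) '' Ioo 0 1 = Ioi (0:ℝ) := by
    ext t
    constructor
    · rintro ⟨u, ⟨hu0, hu1⟩, rfl⟩
      have : 0 < 1 - u := by linarith
      exact div_pos hu0 this
    · intro ht
      simp only [Set.mem_Ioi] at ht
      refine ⟨t / (1+t), ⟨by positivity, ?_⟩, ?_⟩
      · rw [div_lt_one (by linarith)]; linarith
      · field_simp; ring
  have hderiv : ∀ u ∈ Ioo (0:ℝ) 1,
      HasDerivWithinAt (fun u : ℝ => u / (1-u)) (((1-u)^2)⁻¹) (Ioo 0 1) u := by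
    intro u hu
    have hs : (1:ℝ) - u ≠ 0 := by obtain ⟨h0, h1⟩ := hu; intro h; linarith [h]
    have := (hasDerivAt_id u).fun_div ((hasDerivAt_const u (1:ℝ)).fun_sub (hasDerivAt_id u)) hs
    refine (this.congr_deriv ?_).hasDerivWithinAt
    simp only [id]
    field_simp
    ring
  have hinj : Set.InjOn (fun u : ℝ => u / (1-u)) (Ioo 0 1) := by
    intro u1 h1 u2 h2 h
    obtain ⟨h10, h11⟩ := h1; obtain ⟨h20, h21⟩ := h2
    have d1 : (1:ℝ) - u1 ≠ 0 := by intro hh; linarith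
    have d2 : (1:ℝ) - u2 ≠ 0 := by intro hh; linarith
    simp only at h
    rw [div_eq_div_iff d1 d2] at h
    nlinarith
  rw [← himg, integral_image_eq_integral_abs_deriv_smul measurableSet_Ioo hderiv hinj]
  rw [← integral_beta01 hc hq]
  apply setIntegral_congr_fun measurableSet_Ioo
  intro u hu
  obtain ⟨hu0, hu1⟩ := hu
  have hs : (0:ℝ) < 1 - u := by linarith
  simp only [smul_eq_mul]
  have h1 : (1:ℝ) + u/(1-u) = (1-u)⁻¹ := by field_simp; ring
  rw [abs_of_pos (by positivity), h1, Real.div_rpow hu0.le hs.le,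
    Real.inv_rpow hs.le, ← Real.rpow_neg hs.le, neg_neg,
    ← Real.rpow_natCast (1-u) 2, ← Real.rpow_neg hs.le,
    div_eq_mul_inv (u ^ (c-1)), ← Real.rpow_neg hs.le (c-1)]
  rw [show (1-u) ^ (-((2:ℕ):ℝ)) * (u ^ (c-1) * (1-u) ^ (-(c-1)) * (1-u) ^ (c+q))
      = u ^ (c-1) * ((1-u) ^ (-((2:ℕ):ℝ)) * (1-u) ^ (-(c-1)) * (1-u) ^ (c+q)) by ring,
    ← Real.rpow_add hs, ← Real.rpow_add hs]
  norm_num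
  left
  congr 1
  ring

end Aux

set_option maxHeartbeats 2000000 in
/-- For `a, b₁, b₂ > 0` and `x, y ∈ [0,1)`, the double series defining
`B(a,b₁+b₂)·F₁(a;b₁,b₂;a+b₁+b₂;x,y)` converges absolutely and equals the convergent
improper integral `∫₀^∞ t^{a-1}(1+t)^{-a}(1+(1-x)t)^{-b₁}(1+(1-y)t)^{-b₂} dt`. -/
theorem appell_series_eq_integral (a b1 b2 x y : ℝ)
    (ha : 0 < a) (hb1 : 0 < b1) (hb2 : 0 < b2)
    (hx0 : 0 ≤ x) (hx1 : x < 1) (hy0 : 0 ≤ y) (hy1 : y < 1) :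
    Summable (fun p : ℕ × ℕ => |eulerBeta a (b1 + b2) * F1term a b1 b2 x y p|) ∧
    IntegrableOn
      (fun t : ℝ => t ^ (a - 1) * (1 + t) ^ (-a) *
        (1 + (1 - x) * t) ^ (-b1) * (1 + (1 - y) * t) ^ (-b2)) (Set.Ioi 0) ∧
    eulerBeta a (b1 + b2) * ∑' p : ℕ × ℕ, F1term a b1 b2 x y p =
      ∫ t in Set.Ioi (0 : ℝ),
        t ^ (a - 1) * (1 + t) ^ (-a) *
          (1 + (1 - x) * t) ^ (-b1) * (1 + (1 - y) * t) ^ (-b2) := by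
  have hq : (0:ℝ) < b1 + b2 := by linarith
  have haq : (0:ℝ) < a + (b1 + b2) := by linarith
  have habq : (0:ℝ) < a + b1 + b2 := by linarith
  have hassoc : a + b1 + b2 = a + (b1 + b2) := add_assoc a b1 b2
  have h1x : (0:ℝ) < 1 - x := by linarith
  have h1y : (0:ℝ) < 1 - y := by linarith
  have heB : 0 < eulerBeta a (b1 + b2) :=
    div_pos (mul_pos (Real.Gamma_pos_of_pos ha) (Real.Gamma_pos_of_pos hq))
      (Real.Gamma_pos_of_pos haq)
  set A : ℕ → ℝ := fun k => poch b1 k * x ^ k / (Nat.factorial k) with hAdef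
  set B : ℕ → ℝ := fun n => poch b2 n * y ^ n / (Nat.factorial n) with hBdef
  have hA0 : ∀ k, 0 ≤ A k := fun k => by
    have := poch_pos hb1 k
    rw [hAdef]; positivity
  have hB0 : ∀ n, 0 ≤ B n := fun n => by
    have := poch_pos hb2 n
    rw [hBdef]; positivity
  have hABsum : Summable (fun p : ℕ × ℕ => A p.1 * B p.2) :=
    Summable.mul_of_nonneg (summable_poch hb1 hx0 hx1) (summable_poch hb2 hy0 hy1)
      (fun k => hA0 k) (fun n => hB0 n)
  have hF1 : ∀ p : ℕ × ℕ, F1term a b1 b2 x y p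
      = poch a (p.1 + p.2) / poch (a + b1 + b2) (p.1 + p.2) * (A p.1 * B p.2) := by
    intro p
    rw [F1term, hAdef, hBdef]
    have h1 : poch (a + b1 + b2) (p.1 + p.2) ≠ 0 := (poch_pos habq _).ne'
    have h2 : (Nat.factorial p.1 : ℝ) ≠ 0 := Nat.cast_ne_zero.mpr (Nat.factorial_ne_zero _)
    have h3 : (Nat.factorial p.2 : ℝ) ≠ 0 := Nat.cast_ne_zero.mpr (Nat.factorial_ne_zero _)
    field_simp
  have hF1nonneg : ∀ p : ℕ × ℕ, 0 ≤ F1term a b1 b2 x y p := fun p => by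
    rw [hF1]
    have h1 := poch_pos ha (p.1 + p.2)
    have h2 := poch_pos habq (p.1 + p.2)
    have h3 := hA0 p.1
    have h4 := hB0 p.2
    positivity
  have hF1le : ∀ p : ℕ × ℕ, F1term a b1 b2 x y p ≤ A p.1 * B p.2 := fun p => by
    rw [hF1]
    have hple : poch a (p.1 + p.2) / poch (a + b1 + b2) (p.1 + p.2) ≤ 1 := by
      rw [div_le_one (poch_pos habq _)]
      exact poch_le ha (by linarith) _
    have h0 : 0 ≤ poch a (p.1 + p.2) / poch (a + b1 + b2) (p.1 + p.2) :=
      le_of_lt (div_pos (poch_pos ha _) (poch_pos habq _))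
    calc poch a (p.1 + p.2) / poch (a + b1 + b2) (p.1 + p.2) * (A p.1 * B p.2)
        ≤ 1 * (A p.1 * B p.2) :=
          mul_le_mul_of_nonneg_right hple (mul_nonneg (hA0 p.1) (hB0 p.2))
      _ = A p.1 * B p.2 := one_mul _
  have hsum1 : Summable (fun p : ℕ × ℕ => F1term a b1 b2 x y p) :=
    hABsum.of_nonneg_of_le hF1nonneg hF1le
  have part1 : Summable (fun p : ℕ × ℕ => |eulerBeta a (b1 + b2) * F1term a b1 b2 x y p|) := by
    apply Summable.congr (hsum1.mul_left (eulerBeta a (b1 + b2)))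
    intro p
    exact (abs_of_nonneg (mul_nonneg heB.le (hF1nonneg p))).symm
  -- continuity / measurability of the integrand
  have hIcont : ContinuousOn (fun t : ℝ => t ^ (a - 1) * (1 + t) ^ (-a) *
      (1 + (1 - x) * t) ^ (-b1) * (1 + (1 - y) * t) ^ (-b2)) (Set.Ioi (0:ℝ)) := by
    apply ContinuousOn.mul
    apply ContinuousOn.mul
    apply ContinuousOn.mul
    · exact continuousOn_id.rpow_const (fun t ht => Or.inl (ne_of_gt ht))
    · exact (continuousOn_const.add continuousOn_id).rpow_const
        (fun t ht => Or.inl (by simp only [Set.mem_Ioi] at ht; show (1:ℝ) + t ≠ 0; positivity))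
    · exact (continuousOn_const.add (continuousOn_const.mul continuousOn_id)).rpow_const
        (fun t ht => Or.inl (by simp only [Set.mem_Ioi, id] at ht; show (1:ℝ) + (1 - x) * t ≠ 0; positivity))
    · exact (continuousOn_const.add (continuousOn_const.mul continuousOn_id)).rpow_const
        (fun t ht => Or.inl (by simp only [Set.mem_Ioi, id] at ht; show (1:ℝ) + (1 - y) * t ≠ 0; positivity))
  -- integrability of the integrand
  have part2 : IntegrableOn (fun t : ℝ => t ^ (a - 1) * (1 + t) ^ (-a) *
      (1 + (1 - x) * t) ^ (-b1) * (1 + (1 - y) * t) ^ (-b2)) (Set.Ioi (0:ℝ)) := by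
    have hmaj : IntegrableOn (fun t : ℝ => ((1 - x) ^ (-b1) * (1 - y) ^ (-b2)) *
        (t ^ (a - 1) * (1 + t) ^ (-(a + (b1 + b2))))) (Set.Ioi (0:ℝ)) :=
      (integrableOn_betaI ha hq).const_mul _
    apply Integrable.mono' hmaj (hIcont.aestronglyMeasurable measurableSet_Ioi)
    filter_upwards [ae_restrict_mem measurableSet_Ioi] with t ht
    simp only [Set.mem_Ioi] at ht
    have h1t : (0:ℝ) < 1 + t := by linarith
    have hP1 : (0:ℝ) < 1 + (1 - x) * t := by positivity
    have hP2 : (0:ℝ) < 1 + (1 - y) * t := by positivity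
    have hn1 : (0:ℝ) ≤ t ^ (a - 1) := Real.rpow_nonneg ht.le _
    have hn2 : (0:ℝ) ≤ (1 + t) ^ (-a) := Real.rpow_nonneg h1t.le _
    have hn3 : (0:ℝ) ≤ (1 + (1 - x) * t) ^ (-b1) := Real.rpow_nonneg hP1.le _
    have hn4 : (0:ℝ) ≤ (1 + (1 - y) * t) ^ (-b2) := Real.rpow_nonneg hP2.le _
    rw [norm_of_nonneg (by positivity)]
    have hb1' : (1 + (1 - x) * t) ^ (-b1) ≤ (1 - x) ^ (-b1) * (1 + t) ^ (-b1) := by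
      have hle : (1 - x) * (1 + t) ≤ 1 + (1 - x) * t := by nlinarith
      calc (1 + (1 - x) * t) ^ (-b1) ≤ ((1 - x) * (1 + t)) ^ (-b1) :=
            Real.rpow_le_rpow_of_nonpos (by positivity) hle (by linarith)
        _ = (1 - x) ^ (-b1) * (1 + t) ^ (-b1) := Real.mul_rpow h1x.le h1t.le
    have hb2' : (1 + (1 - y) * t) ^ (-b2) ≤ (1 - y) ^ (-b2) * (1 + t) ^ (-b2) := by
      have hle : (1 - y) * (1 + t) ≤ 1 + (1 - y) * t := by nlinarith
      calc (1 + (1 - y) * t) ^ (-b2) ≤ ((1 - y) * (1 + t)) ^ (-b2) :=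
            Real.rpow_le_rpow_of_nonpos (by positivity) hle (by linarith)
        _ = (1 - y) ^ (-b2) * (1 + t) ^ (-b2) := Real.mul_rpow h1y.le h1t.le
    have hcomb : (1 + t) ^ (-a) * (1 + t) ^ (-b1) * (1 + t) ^ (-b2)
        = (1 + t) ^ (-(a + (b1 + b2))) := by
      rw [← Real.rpow_add h1t, ← Real.rpow_add h1t]
      congr 1
      ring
    calc t ^ (a - 1) * (1 + t) ^ (-a) * (1 + (1 - x) * t) ^ (-b1) * (1 + (1 - y) * t) ^ (-b2)
        ≤ t ^ (a - 1) * (1 + t) ^ (-a) * ((1 - x) ^ (-b1) * (1 + t) ^ (-b1)) *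
            (1 + (1 - y) * t) ^ (-b2) := by
          apply mul_le_mul_of_nonneg_right _ hn4
          exact mul_le_mul_of_nonneg_left hb1' (by positivity)
      _ ≤ t ^ (a - 1) * (1 + t) ^ (-a) * ((1 - x) ^ (-b1) * (1 + t) ^ (-b1)) *
            ((1 - y) ^ (-b2) * (1 + t) ^ (-b2)) := by
          apply mul_le_mul_of_nonneg_left hb2'
          have : (0:ℝ) ≤ (1 - x) ^ (-b1) := Real.rpow_nonneg h1x.le _
          have : (0:ℝ) ≤ (1 + t) ^ (-b1) := Real.rpow_nonneg h1t.le _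
          positivity
      _ = ((1 - x) ^ (-b1) * (1 - y) ^ (-b2)) *
            (t ^ (a - 1) * ((1 + t) ^ (-a) * (1 + t) ^ (-b1) * (1 + t) ^ (-b2))) := by ring
      _ = ((1 - x) ^ (-b1) * (1 - y) ^ (-b2)) *
            (t ^ (a - 1) * (1 + t) ^ (-(a + (b1 + b2)))) := by rw [hcomb]
  refine ⟨part1, part2, ?_⟩
  -- term functions
  set h : ℕ × ℕ → ℝ → ℝ := fun p t => (A p.1 * B p.2) *
    (t ^ (a + ((p.1 + p.2 : ℕ) : ℝ) - 1) *
      (1 + t) ^ (-(a + ((p.1 + p.2 : ℕ) : ℝ) + (b1 + b2)))) with hhdef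
  have hm : ∀ p : ℕ × ℕ, (0:ℝ) < a + ((p.1 + p.2 : ℕ) : ℝ) := fun p => by positivity
  have hint : ∀ p : ℕ × ℕ, Integrable (h p) (volume.restrict (Set.Ioi (0:ℝ))) := fun p =>
    (integrableOn_betaI (hm p) hq).const_mul _
  have hbetafact : ∀ m : ℕ, eulerBeta (a + (m : ℝ)) (b1 + b2)
      = poch a m / poch (a + b1 + b2) m * eulerBeta a (b1 + b2) := by
    intro m
    rw [eulerBeta, eulerBeta, Gamma_poch ha m,
      show a + (m:ℝ) + (b1 + b2) = (a + (b1 + b2)) + (m:ℝ) by ring, Gamma_poch haq m, hassoc]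
    have hg1 : Real.Gamma (a + (b1 + b2)) ≠ 0 := (Real.Gamma_pos_of_pos haq).ne'
    have hg2 : poch (a + (b1 + b2)) m ≠ 0 := (poch_pos haq m).ne'
    field_simp
  have hT : ∀ p : ℕ × ℕ, (A p.1 * B p.2) * eulerBeta (a + ((p.1 + p.2 : ℕ) : ℝ)) (b1 + b2)
      = eulerBeta a (b1 + b2) * F1term a b1 b2 x y p := fun p => by
    rw [hbetafact (p.1 + p.2), hF1 p]
    ring
  have hval : ∀ p : ℕ × ℕ, ∫ t in Set.Ioi (0:ℝ), h p t
      = eulerBeta a (b1 + b2) * F1term a b1 b2 x y p := fun p => by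
    rw [hhdef]
    simp only
    rw [integral_const_mul, integral_betaIoi (hm p) hq, hT p]
  have hnorm : ∀ p : ℕ × ℕ, ∫ t in Set.Ioi (0:ℝ), ‖h p t‖
      = eulerBeta a (b1 + b2) * F1term a b1 b2 x y p := fun p => by
    rw [← hval p]
    apply setIntegral_congr_fun measurableSet_Ioi
    intro t ht
    simp only [Set.mem_Ioi] at ht
    apply norm_of_nonneg
    rw [hhdef]
    have e1 : (0:ℝ) ≤ t ^ (a + ((p.1 + p.2 : ℕ) : ℝ) - 1) := Real.rpow_nonneg ht.le _
    have e2 : (0:ℝ) ≤ (1 + t) ^ (-(a + ((p.1 + p.2 : ℕ) : ℝ) + (b1 + b2))) :=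
      Real.rpow_nonneg (by linarith) _
    have e3 := hA0 p.1
    have e4 := hB0 p.2
    positivity
  have hsumnorm : Summable (fun p : ℕ × ℕ => ∫ t in Set.Ioi (0:ℝ), ‖h p t‖) :=
    Summable.congr (hsum1.mul_left (eulerBeta a (b1 + b2))) (fun p => (hnorm p).symm)
  have hswap := MeasureTheory.integral_tsum_of_summable_integral_norm hint hsumnorm
  have hpt : ∀ t ∈ Set.Ioi (0:ℝ), (∑' p : ℕ × ℕ, h p t)
      = t ^ (a - 1) * (1 + t) ^ (-a) *
        (1 + (1 - x) * t) ^ (-b1) * (1 + (1 - y) * t) ^ (-b2) := by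
    intro t ht
    simp only [Set.mem_Ioi] at ht
    have h1t : (0:ℝ) < 1 + t := by linarith
    set s : ℝ := t / (1 + t) with hsdef
    have hs0 : 0 ≤ s := by positivity
    have hs1 : s < 1 := by rw [hsdef, div_lt_one h1t]; linarith
    have hxs1 : x * s < 1 := by nlinarith
    have hys1 : y * s < 1 := by nlinarith
    have hA' := hasSum_binomial hb1 (mul_nonneg hx0 hs0) hxs1
    have hB' := hasSum_binomial hb2 (mul_nonneg hy0 hs0) hys1
    have hABsum' : Summable (fun p : ℕ × ℕ =>
        (poch b1 p.1 * (x * s) ^ p.1 / (Nat.factorial p.1)) *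
        (poch b2 p.2 * (y * s) ^ p.2 / (Nat.factorial p.2))) :=
      Summable.mul_of_nonneg hA'.summable hB'.summable
        (fun k => by have := poch_pos hb1 k; have := mul_nonneg hx0 hs0; positivity)
        (fun n => by have := poch_pos hb2 n; have := mul_nonneg hy0 hs0; positivity)
    have hprod := (hA'.mul hB' hABsum').mul_left (t ^ (a - 1) * (1 + t) ^ (-(a + (b1 + b2))))
    have hfun : ∀ p : ℕ × ℕ, (t ^ (a - 1) * (1 + t) ^ (-(a + (b1 + b2)))) *
        ((poch b1 p.1 * (x * s) ^ p.1 / (Nat.factorial p.1)) *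
         (poch b2 p.2 * (y * s) ^ p.2 / (Nat.factorial p.2))) = h p t := by
      intro p
      have e1 : t ^ (a - 1) * (t : ℝ) ^ (p.1 + p.2)
          = t ^ (a + ((p.1 + p.2 : ℕ) : ℝ) - 1) := by
        rw [← Real.rpow_natCast t (p.1 + p.2), ← Real.rpow_add ht]
        congr 1
        ring
      have e2 : (1 + t) ^ (-(a + (b1 + b2))) * ((1 + t) ^ (p.1 + p.2) : ℝ)⁻¹
          = (1 + t) ^ (-(a + ((p.1 + p.2 : ℕ) : ℝ) + (b1 + b2))) := by
        rw [← Real.rpow_natCast (1 + t) (p.1 + p.2), ← Real.rpow_neg h1t.le,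
          ← Real.rpow_add h1t]
        congr 1
        ring
      rw [hhdef, hAdef, hBdef]
      simp only
      rw [← e1, ← e2, mul_pow, mul_pow, hsdef, div_pow, div_pow]
      have hfac1 : (Nat.factorial p.1 : ℝ) ≠ 0 := Nat.cast_ne_zero.mpr (Nat.factorial_ne_zero _)
      have hfac2 : (Nat.factorial p.2 : ℝ) ≠ 0 := Nat.cast_ne_zero.mpr (Nat.factorial_ne_zero _)
      have h1tp : ((1 + t) ^ (p.1 + p.2) : ℝ) ≠ 0 := pow_ne_zero _ h1t.ne'
      field_simp
      ring
    have hvaleq : (t ^ (a - 1) * (1 + t) ^ (-(a + (b1 + b2)))) *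
        ((1 - x * s) ^ (-b1) * (1 - y * s) ^ (-b2))
        = t ^ (a - 1) * (1 + t) ^ (-a) *
          (1 + (1 - x) * t) ^ (-b1) * (1 + (1 - y) * t) ^ (-b2) := by
      have ex : 1 - x * s = (1 + (1 - x) * t) / (1 + t) := by
        rw [hsdef]
        field_simp
        ring
      have ey : 1 - y * s = (1 + (1 - y) * t) / (1 + t) := by
        rw [hsdef]
        field_simp
        ring
      have hP1 : (0:ℝ) < 1 + (1 - x) * t := by positivity
      have hP2 : (0:ℝ) < 1 + (1 - y) * t := by positivity
      rw [ex, ey, Real.div_rpow hP1.le h1t.le, Real.div_rpow hP2.le h1t.le]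
      have hc : (1 + t) ^ (-(a + (b1 + b2))) / ((1 + t) ^ (-b1) * (1 + t) ^ (-b2))
          = (1 + t) ^ (-a) := by
        rw [← Real.rpow_add h1t, ← Real.rpow_sub h1t]
        congr 1
        ring
      rw [← hc]
      have hq1 : (1 + t) ^ (-b1) ≠ 0 := (Real.rpow_pos_of_pos h1t _).ne'
      have hq2 : (1 + t) ^ (-b2) ≠ 0 := (Real.rpow_pos_of_pos h1t _).ne'
      field_simp
    calc (∑' p : ℕ × ℕ, h p t)
        = ∑' p : ℕ × ℕ, (t ^ (a - 1) * (1 + t) ^ (-(a + (b1 + b2)))) *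
            ((poch b1 p.1 * (x * s) ^ p.1 / (Nat.factorial p.1)) *
             (poch b2 p.2 * (y * s) ^ p.2 / (Nat.factorial p.2))) :=
          tsum_congr (fun p => (hfun p).symm)
      _ = (t ^ (a - 1) * (1 + t) ^ (-(a + (b1 + b2)))) *
            ((1 - x * s) ^ (-b1) * (1 - y * s) ^ (-b2)) := hprod.tsum_eq
      _ = _ := hvaleq
  rw [← tsum_mul_left]
  calc (∑' p : ℕ × ℕ, eulerBeta a (b1 + b2) * F1term a b1 b2 x y p)
      = ∑' p : ℕ × ℕ, ∫ t in Set.Ioi (0:ℝ), h p t := tsum_congr (fun p => (hval p).symm)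
    _ = ∫ t in Set.Ioi (0:ℝ), ∑' p : ℕ × ℕ, h p t := hswap
    _ = _ := setIntegral_congr_fun measurableSet_Ioi hpt
end

section
/- Let 0 ≤ x ≤ y < 1. Then g_{1/2,1/2,1/2}(x,y) = 2·ln(4/(√(1−x) + √(1−y))). That is, ln(1/(1−x)) + 2 ln 2 + Σ_{k=1}^∞ (1/2)_k/(k·k!)·((y−x)/(1−x))^k = ln 16 − 2 ln(√(1−x) + √(1−y)). -/
open Real MeasureTheory

namespace CGaux

lemma poch_zero (c : ℝ) : poch c 0 = 1 := by simp [poch]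

lemma poch_succ (c : ℝ) (n : ℕ) : poch c (n+1) = poch c n * (c + n) := by
  simp [poch, ascPochhammer_succ_eval]

lemma poch_one (k : ℕ) : poch 1 k = (Nat.factorial k : ℝ) := by
  induction k with
  | zero => simp [poch_zero]
  | succ n ih => rw [poch_succ, ih]; push_cast [Nat.factorial_succ]; ring

lemma poch_half_pos (k : ℕ) : 0 < poch (1/2) k := by
  induction k with
  | zero => simp [poch_zero]
  | succ n ih =>
    rw [poch_succ]
    have : (0:ℝ) < 1/2 + n := by positivity
    positivity

/-- `aa j = (1/2)_j / j!` -/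
noncomputable def aa (j : ℕ) : ℝ := poch (1/2) j / (Nat.factorial j : ℝ)

lemma aa_zero : aa 0 = 1 := by simp [aa, poch_zero]

lemma aa_pos (j : ℕ) : 0 < aa j := by
  have := poch_half_pos j
  have : (0:ℝ) < (Nat.factorial j : ℝ) := by positivity
  unfold aa; positivity

lemma aa_succ (j : ℕ) : ((j:ℝ) + 1) * aa (j+1) = ((j:ℝ) + 1/2) * aa j := by
  have hf : (Nat.factorial (j+1) : ℝ) = ((j:ℝ)+1) * (Nat.factorial j : ℝ) := by
    push_cast [Nat.factorial_succ]; ring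
  have hfj : (Nat.factorial j : ℝ) ≠ 0 := by positivity
  have h1 : ((j:ℝ)+1) ≠ 0 := by positivity
  unfold aa
  rw [poch_succ, hf]
  field_simp
  ring

lemma aa_le_one (j : ℕ) : aa j ≤ 1 := by
  induction j with
  | zero => simp [aa_zero]
  | succ n ih =>
    have h := aa_succ n
    have hpos : (0:ℝ) < (n:ℝ) + 1 := by positivity
    have : aa (n+1) = ((n:ℝ) + 1/2) / ((n:ℝ)+1) * aa n := by
      field_simp at h ⊢; linarith [h]
    rw [this]
    have h2 : ((n:ℝ) + 1/2) / ((n:ℝ)+1) ≤ 1 := by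
      rw [div_le_one hpos]; linarith
    have := aa_pos n
    calc ((n:ℝ) + 1/2) / ((n:ℝ)+1) * aa n ≤ 1 * aa n := by
          apply mul_le_mul_of_nonneg_right h2 (le_of_lt (aa_pos n))
      _ = aa n := one_mul _
      _ ≤ 1 := ih

lemma aa_one : aa 1 = 1/2 := by
  have := aa_succ 0
  simp [aa_zero] at this
  simpa using this

lemma summable_u {r : ℝ} (hr0 : 0 ≤ r) (hr1 : r < 1) :
    Summable (fun j : ℕ => (j : ℝ) * r ^ (j - 1)) := by
  rw [← summable_nat_add_iff 1]
  have h : ∀ n : ℕ, ((n+1 : ℕ) : ℝ) * r ^ ((n+1) - 1) = (n:ℝ) * r ^ n + r ^ n := by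
    intro n; push_cast; ring
  have hs1 : Summable (fun n : ℕ => (n:ℝ) * r ^ n) := by
    have := summable_pow_mul_geometric_of_norm_lt_one 1 (by rwa [Real.norm_eq_abs, abs_of_nonneg hr0] : ‖r‖ < 1)
    simpa using this
  have hs2 : Summable (fun n : ℕ => r ^ n) := summable_geometric_of_lt_one hr0 hr1
  exact (hs1.add hs2).congr (fun n => (h n).symm)


set_option maxHeartbeats 1000000 in
lemma hasSum_A {t : ℝ} (ht0 : 0 ≤ t) (ht1 : t < 1) :
    HasSum (fun j : ℕ => aa j * t ^ j) (1 / Real.sqrt (1 - t)) := by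
  set r : ℝ := (1 + t) / 2 with hrdef
  have hr0 : 0 < r := by positivity
  have hrt : t < r := by rw [hrdef]; linarith
  have hr1 : r < 1 := by rw [hrdef]; linarith
  set s : Set ℝ := Set.Ioo (-r) r with hsdef
  have hs_open : IsOpen s := isOpen_Ioo
  have hs_conn : IsPreconnected s := (convex_Ioo _ _).isPreconnected
  have h0s : (0:ℝ) ∈ s := ⟨by linarith, hr0⟩
  have hts : t ∈ s := ⟨by linarith, hrt⟩
  have hu := summable_u hr0.le hr1
  -- derivative of each term
  have hderiv : ∀ (j : ℕ) (z : ℝ),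
      HasDerivAt (fun w => aa j * w ^ j) (aa j * ((j:ℝ) * z ^ (j-1))) z :=
    fun j z => (hasDerivAt_pow j z).const_mul (aa j)
  have hzbound : ∀ z ∈ s, |z| < r := by
    intro z hz; rw [abs_lt]; exact ⟨hz.1, hz.2⟩
  have hbound : ∀ (j : ℕ), ∀ z ∈ s, ‖aa j * ((j:ℝ) * z ^ (j-1))‖ ≤ (j:ℝ) * r ^ (j-1) := by
    intro j z hz
    rw [Real.norm_eq_abs, abs_mul, abs_mul, abs_pow,
      abs_of_pos (aa_pos j), Nat.abs_cast]
    have h1 : |z| ^ (j-1) ≤ r ^ (j-1) := pow_le_pow_left₀ (abs_nonneg z) (hzbound z hz).le _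
    calc aa j * ((j:ℝ) * |z| ^ (j-1)) ≤ 1 * ((j:ℝ) * r ^ (j-1)) := by
          apply mul_le_mul (aa_le_one j) _ (by positivity) zero_le_one
          exact mul_le_mul_of_nonneg_left h1 (Nat.cast_nonneg j)
      _ = (j:ℝ) * r ^ (j-1) := one_mul _
  have hsum0 : Summable (fun j : ℕ => aa j * (0:ℝ) ^ j) := by
    apply summable_of_ne_finset_zero (s := {0})
    intro j hj
    simp only [Finset.mem_singleton] at hj
    rw [zero_pow hj, mul_zero]
  -- A is differentiable on s, with derivative the term-wise sum
  set A : ℝ → ℝ := fun w => ∑' j : ℕ, aa j * w ^ j with hAdef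
  set D : ℝ → ℝ := fun z => ∑' j : ℕ, aa j * ((j:ℝ) * z ^ (j-1)) with hDdef
  have hA : ∀ z ∈ s, HasDerivAt A (D z) z := by
    intro z hz
    exact hasDerivAt_tsum_of_isPreconnected hu hs_open hs_conn
      (fun j y hy => hderiv j y) (fun j y hy => hbound j y hy) h0s hsum0 hz
  have hAsummable : ∀ z ∈ s, Summable (fun j : ℕ => aa j * z ^ j) := by
    intro z hz
    exact summable_of_summable_hasDerivAt_of_isPreconnected hu hs_open hs_conn
      (fun j y hy => hderiv j y) (fun j y hy => hbound j y hy) h0s hsum0 hz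
  -- summabilities for the manipulation
  have hDsummable : ∀ z ∈ s, Summable (fun j : ℕ => aa j * ((j:ℝ) * z ^ (j-1))) := by
    intro z hz
    exact Summable.of_norm_bounded hu (fun j => hbound j z hz)
  have hcsummable : ∀ z ∈ s, Summable (fun j : ℕ => (j:ℝ) * aa j * z ^ j) := by
    intro z hz
    apply Summable.of_norm_bounded hu
    intro j
    rw [Real.norm_eq_abs, abs_mul, abs_mul, abs_pow, abs_of_pos (aa_pos j), Nat.abs_cast]
    have h1 : |z| ^ j ≤ r ^ (j-1) := by
      calc |z| ^ j ≤ r ^ j := pow_le_pow_left₀ (abs_nonneg z) (hzbound z hz).le _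
        _ ≤ r ^ (j-1) := pow_le_pow_of_le_one hr0.le hr1.le (Nat.sub_le j 1)
    calc (j:ℝ) * aa j * |z| ^ j ≤ (j:ℝ) * 1 * r ^ (j-1) := by
          apply mul_le_mul _ h1 (by positivity) (by positivity)
          exact mul_le_mul_of_nonneg_left (aa_le_one j) (Nat.cast_nonneg j)
      _ = (j:ℝ) * r ^ (j-1) := by ring
  -- the key series identity : (1 - z) * D z = A z / 2
  have hDzdef : ∀ z : ℝ, D z = ∑' j : ℕ, aa j * ((j:ℝ) * z ^ (j-1)) := fun _ => rfl
  have hAzdef : ∀ z : ℝ, A z = ∑' j : ℕ, aa j * z ^ j := fun _ => rfl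
  have key : ∀ z ∈ s, (1 - z) * D z = A z / 2 := by
    intro z hz
    have hDz : D z = ∑' k : ℕ, aa (k+1) * (((k:ℝ)+1) * z ^ k) := by
      rw [hDzdef z, Summable.tsum_eq_zero_add (hDsummable z hz)]
      simp only [Nat.cast_zero, zero_mul, mul_zero, zero_add, Nat.cast_add, Nat.cast_one,
        Nat.add_sub_cancel]
    have hBsum : Summable (fun k : ℕ => aa (k+1) * (((k:ℝ)+1) * z ^ k)) := by
      have := (summable_nat_add_iff 1).2 (hDsummable z hz)
      simpa using this
    have hzD : z * D z = ∑' j : ℕ, (j:ℝ) * aa j * z ^ j := by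
      rw [Summable.tsum_eq_zero_add (hcsummable z hz), hDz, ← tsum_mul_left]
      simp only [Nat.cast_zero, zero_mul, zero_add, Nat.cast_add, Nat.cast_one]
      exact tsum_congr fun k => by ring
    have hsplit : D z - z * D z = ∑' k : ℕ, aa k / 2 * z ^ k := by
      rw [hzD, hDz, ← Summable.tsum_sub hBsum (hcsummable z hz)]
      refine tsum_congr fun k => ?_
      have h := aa_succ k
      calc aa (k+1) * (((k:ℝ)+1) * z ^ k) - (k:ℝ) * aa k * z ^ k
          = (((k:ℝ)+1) * aa (k+1)) * z ^ k - (k:ℝ) * aa k * z ^ k := by ring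
        _ = (((k:ℝ)+1/2) * aa k) * z ^ k - (k:ℝ) * aa k * z ^ k := by rw [h]
        _ = aa k / 2 * z ^ k := by ring
    have h2 : ∑' k : ℕ, aa k / 2 * z ^ k = A z / 2 := by
      rw [hAzdef z, tsum_div_const.symm]
      exact tsum_congr fun k => by ring
    calc (1 - z) * D z = D z - z * D z := by ring
      _ = ∑' k : ℕ, aa k / 2 * z ^ k := hsplit
      _ = A z / 2 := h2
  -- h := sqrt(1-z) * A z has zero derivative on s
  have hderiv_h : ∀ z ∈ s, HasDerivAt (fun w => Real.sqrt (1 - w) * A w) 0 z := by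
    intro z hz
    have hz1 : z < 1 := lt_trans hz.2 hr1
    have h1z : (0:ℝ) < 1 - z := by linarith
    have hsq : Real.sqrt (1 - z) ≠ 0 := by positivity
    have hsqrt : HasDerivAt (fun w => Real.sqrt (1 - w)) (1 / (2 * Real.sqrt (1-z)) * (-1)) z := by
      have h1 : HasDerivAt (fun w : ℝ => 1 - w) (-1) z := by
        simpa using (hasDerivAt_id z).const_sub 1
      exact (Real.hasDerivAt_sqrt h1z.ne').comp z h1
    have hmul := hsqrt.mul (hA z hz)
    have hss : Real.sqrt (1-z) * Real.sqrt (1-z) = 1 - z := Real.mul_self_sqrt h1z.le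
    have hA2 : A z = 2 * ((1-z) * D z) := by linarith [key z hz]
    have hval : 1 / (2 * Real.sqrt (1-z)) * (-1) * A z + Real.sqrt (1 - z) * D z = 0 := by
      rw [hA2]
      field_simp
      linear_combination (D z) * hss
    rw [hval] at hmul
    exact hmul
  -- h is constant on [0, t]
  have hsub : Set.Icc (0:ℝ) t ⊆ s := by
    intro z hz
    exact ⟨by linarith [hz.1], lt_of_le_of_lt hz.2 hrt⟩
  have hconst := constant_of_has_deriv_right_zero
    (f := fun w => Real.sqrt (1 - w) * A w) (a := 0) (b := t)
    (fun z hz => ((hderiv_h z (hsub hz)).continuousAt).continuousWithinAt)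
    (fun z hz => ((hderiv_h z (hsub ⟨hz.1, hz.2.le⟩)).hasDerivWithinAt))
    t (Set.mem_Icc.2 ⟨ht0, le_refl t⟩)
  have hA0 : A 0 = 1 := by
    have h00 : A 0 = ∑' j : ℕ, aa j * (0:ℝ) ^ j := rfl
    rw [h00, tsum_eq_single 0 (by intro j hj; rw [zero_pow hj, mul_zero])]
    simp [aa_zero]
  have hconst2 : Real.sqrt (1 - t) * A t = Real.sqrt (1 - 0) * A 0 := hconst
  rw [hA0, sub_zero, Real.sqrt_one, mul_one] at hconst2
  have hsqt : (0:ℝ) < Real.sqrt (1 - t) := Real.sqrt_pos.2 (by linarith)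
  have hAt : A t = 1 / Real.sqrt (1 - t) := by
    rw [eq_div_iff hsqt.ne', mul_comm]; exact hconst2
  convert (hAsummable t hts).hasSum using 1
  exact hAt.symm


set_option maxHeartbeats 1000000 in
lemma tsum_S {t : ℝ} (ht0 : 0 ≤ t) (ht1 : t < 1) :
    ∑' k : ℕ, poch (1/2) (k+1) / (((k:ℝ)+1) * (Nat.factorial (k+1) : ℝ)) * t ^ (k+1)
      = Real.log 4 - 2 * Real.log (1 + Real.sqrt (1 - t)) := by
  have hcc : ∀ k : ℕ, poch (1/2) (k+1) / (((k:ℝ)+1) * (Nat.factorial (k+1) : ℝ))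
      = aa (k+1) / ((k:ℝ)+1) := by
    intro k
    have h1 : ((k:ℝ)+1) ≠ 0 := by positivity
    have h2 : (Nat.factorial (k+1) : ℝ) ≠ 0 := by positivity
    simp only [aa]
    rw [div_div, mul_comm]
  set r : ℝ := (1 + t) / 2 with hrdef
  have hr0 : 0 < r := by positivity
  have hrt : t < r := by rw [hrdef]; linarith
  have hr1 : r < 1 := by rw [hrdef]; linarith
  set s : Set ℝ := Set.Ioo (-r) r with hsdef
  have hs_open : IsOpen s := isOpen_Ioo
  have hs_conn : IsPreconnected s := (convex_Ioo _ _).isPreconnected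
  have h0s : (0:ℝ) ∈ s := ⟨by linarith, hr0⟩
  have hts : t ∈ s := ⟨by linarith, hrt⟩
  have hzbound : ∀ z ∈ s, |z| < r := by
    intro z hz; rw [abs_lt]; exact ⟨hz.1, hz.2⟩
  have hu : Summable (fun k : ℕ => r ^ k) := summable_geometric_of_lt_one hr0.le hr1
  have hderiv : ∀ (k : ℕ) (z : ℝ),
      HasDerivAt (fun w => aa (k+1) / ((k:ℝ)+1) * w ^ (k+1)) (aa (k+1) * z ^ k) z := by
    intro k z
    have h1 : ((k:ℝ)+1) ≠ 0 := by positivity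
    have := (hasDerivAt_pow (k+1) z).const_mul (aa (k+1) / ((k:ℝ)+1))
    refine this.congr_deriv ?_
    simp only [Nat.add_sub_cancel, Nat.cast_add, Nat.cast_one]
    field_simp
  have hbound : ∀ (k : ℕ), ∀ z ∈ s, ‖aa (k+1) * z ^ k‖ ≤ r ^ k := by
    intro k z hz
    rw [Real.norm_eq_abs, abs_mul, abs_pow, abs_of_pos (aa_pos (k+1))]
    calc aa (k+1) * |z| ^ k ≤ 1 * r ^ k := by
          apply mul_le_mul (aa_le_one (k+1))
            (pow_le_pow_left₀ (abs_nonneg z) (hzbound z hz).le _) (by positivity) zero_le_one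
      _ = r ^ k := one_mul _
  have hsum0 : Summable (fun k : ℕ => aa (k+1) / ((k:ℝ)+1) * (0:ℝ) ^ (k+1)) := by
    apply summable_of_ne_finset_zero (s := (∅ : Finset ℕ))
    intro k _
    rw [zero_pow (Nat.succ_ne_zero k), mul_zero]
  set S : ℝ → ℝ := fun w => ∑' k : ℕ, aa (k+1) / ((k:ℝ)+1) * w ^ (k+1) with hSdef
  set B : ℝ → ℝ := fun z => ∑' k : ℕ, aa (k+1) * z ^ k with hBdef
  have hS : ∀ z ∈ s, HasDerivAt S (B z) z := by
    intro z hz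
    exact hasDerivAt_tsum_of_isPreconnected hu hs_open hs_conn
      (fun k w hw => hderiv k w) (fun k w hw => hbound k w hw) h0s hsum0 hz
  -- value of B on [0, 1)
  have hBval : ∀ z : ℝ, 0 ≤ z → z < 1 →
      B z = 1 / (Real.sqrt (1-z) * (1 + Real.sqrt (1-z))) := by
    intro z hz0 hz1
    have hAz := hasSum_A hz0 hz1
    have h1z : (0:ℝ) < 1 - z := by linarith
    have hsq : (0:ℝ) < Real.sqrt (1-z) := Real.sqrt_pos.2 h1z
    have hss : Real.sqrt (1-z) * Real.sqrt (1-z) = 1 - z := Real.mul_self_sqrt h1z.le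
    have hBz : B z = ∑' k : ℕ, aa (k+1) * z ^ k := rfl
    rcases eq_or_lt_of_le hz0 with hz0' | hz0'
    · subst hz0'
      rw [hBz, tsum_eq_single 0 (by intro k hk; rw [zero_pow hk, mul_zero])]
      simp [aa_one]
      norm_num
    · -- z > 0
      have hAts : (∑' j : ℕ, aa j * z ^ j) = 1 / Real.sqrt (1-z) := hAz.tsum_eq
      have hshift : (∑' j : ℕ, aa j * z ^ j) = 1 + z * B z := by
        rw [Summable.tsum_eq_zero_add hAz.summable]
        simp only [aa_zero, pow_zero, mul_one]
        congr 1
        rw [hBz, ← tsum_mul_left]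
        exact tsum_congr fun k => by ring
      have hzB : z * B z = 1 / Real.sqrt (1-z) - 1 := by
        rw [← hAts, hshift]; ring
      rw [eq_div_iff (by positivity)]
      have hz' : (1 - Real.sqrt (1-z)) * (1 + Real.sqrt (1-z)) = z := by
        nlinarith [hss]
      field_simp at hzB
      nlinarith [hzB, hss, hsq]
  -- derivative of φ
  have hphi : ∀ z : ℝ, z < 1 →
      HasDerivAt (fun w => Real.log 4 - 2 * Real.log (1 + Real.sqrt (1 - w)))
        (-(1 / (Real.sqrt (1-z) * (1 + Real.sqrt (1-z)))) * (-1)) z := by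
    intro z hz1
    have h1z : (0:ℝ) < 1 - z := by linarith
    have hsq : (0:ℝ) < Real.sqrt (1-z) := Real.sqrt_pos.2 h1z
    have hne : 1 + Real.sqrt (1-z) ≠ 0 := by positivity
    have hsqrt : HasDerivAt (fun w => Real.sqrt (1 - w)) (1 / (2 * Real.sqrt (1-z)) * (-1)) z := by
      have h1 : HasDerivAt (fun w : ℝ => 1 - w) (-1) z := by
        simpa using (hasDerivAt_id z).const_sub 1
      exact (Real.hasDerivAt_sqrt h1z.ne').comp z h1
    have hc : HasDerivAt (fun w => 1 + Real.sqrt (1 - w)) (1 / (2 * Real.sqrt (1-z)) * (-1)) z :=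
      hsqrt.const_add 1
    have hlog := (hc.log hne).const_mul (2:ℝ)
    have hfinal := (hasDerivAt_const z (Real.log 4)).sub hlog
    refine hfinal.congr_deriv ?_
    have hss : Real.sqrt (1-z) * Real.sqrt (1-z) = 1 - z := Real.mul_self_sqrt h1z.le
    field_simp
    ring
  -- the difference H is constant on [0,t]
  set H : ℝ → ℝ := fun w => S w - (Real.log 4 - 2 * Real.log (1 + Real.sqrt (1 - w))) with hHdef
  have hHderiv : ∀ z, z ∈ s → z < 1 → HasDerivAt H (B z - 1 / (Real.sqrt (1-z) * (1 + Real.sqrt (1-z)))) z := by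
    intro z hzs hz1
    have := (hS z hzs).sub (hphi z hz1)
    refine this.congr_deriv ?_
    ring
  have hsub : Set.Icc (0:ℝ) t ⊆ s := fun z hz => ⟨by linarith [hz.1], lt_of_le_of_lt hz.2 hrt⟩
  have hconst := constant_of_has_deriv_right_zero (f := H) (a := 0) (b := t)
    (fun z hz => (hHderiv z (hsub hz) (lt_of_le_of_lt hz.2 ht1)).continuousAt.continuousWithinAt)
    (fun z hz => by
      have hz1 : z < 1 := lt_trans hz.2 ht1
      have h0 := hHderiv z (hsub ⟨hz.1, hz.2.le⟩) hz1
      rw [hBval z hz.1 hz1] at h0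
      simpa using h0.hasDerivWithinAt)
    t (Set.mem_Icc.2 ⟨ht0, le_refl t⟩)
  have hH0 : H 0 = 0 := by
    have hS0 : S 0 = 0 := by
      have : S 0 = ∑' k : ℕ, aa (k+1) / ((k:ℝ)+1) * (0:ℝ) ^ (k+1) := rfl
      rw [this]
      convert tsum_zero with k
      rw [zero_pow (Nat.succ_ne_zero k), mul_zero]
    have hlog4 : Real.log 4 = 2 * Real.log 2 := by
      rw [show (4:ℝ) = 2^2 by norm_num, Real.log_pow]; push_cast; ring
    have : H 0 = S 0 - (Real.log 4 - 2 * Real.log (1 + Real.sqrt (1 - 0))) := rfl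
    rw [this, hS0, hlog4]
    norm_num
  have hHt : H t = 0 := by rw [hconst, hH0]
  have hHt' : S t - (Real.log 4 - 2 * Real.log (1 + Real.sqrt (1 - t))) = 0 := hHt
  have hSt : (∑' k : ℕ, poch (1/2) (k+1) / (((k:ℝ)+1) * (Nat.factorial (k+1) : ℝ)) * t ^ (k+1)) = S t :=
    tsum_congr fun k => by rw [hcc k]
  rw [hSt]
  linarith [hHt']

end CGaux

open CGaux

/-- for `a = b₁ = b₂ = 1/2`, `g` is the Carlson–Gustafson approximation. -/
theorem g_carlson_gustafson (x y : ℝ) (hx0 : 0 ≤ x) (hxy : x ≤ y) (hy1 : y < 1) :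
    g (1/2) (1/2) (1/2) x y =
      2 * Real.log (4 / (Real.sqrt (1 - x) + Real.sqrt (1 - y))) ∧
    Real.log (1 / (1 - x)) + 2 * Real.log 2 +
        ∑' k : ℕ, poch (1/2) (k + 1) / ((k + 1 : ℝ) * (Nat.factorial (k + 1) : ℝ)) *
          ((y - x) / (1 - x)) ^ (k + 1) =
      Real.log 16 - 2 * Real.log (Real.sqrt (1 - x) + Real.sqrt (1 - y)) := by
  have hx1 : x < 1 := lt_of_le_of_lt hxy hy1
  have h1x : (0:ℝ) < 1 - x := by linarith
  have h1y : (0:ℝ) < 1 - y := by linarith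
  set t : ℝ := (y - x) / (1 - x) with htdef
  have ht0 : 0 ≤ t := div_nonneg (by linarith) h1x.le
  have ht1 : t < 1 := by rw [htdef, div_lt_one h1x]; linarith
  have h1t : 1 - t = (1 - y) / (1 - x) := by
    rw [htdef]; field_simp; ring
  -- log facts
  have hsx : (0:ℝ) < Real.sqrt (1 - x) := Real.sqrt_pos.2 h1x
  have hsy : (0:ℝ) < Real.sqrt (1 - y) := Real.sqrt_pos.2 h1y
  have hq : Real.sqrt (1 - y) = Real.sqrt (1 - x) * Real.sqrt ((1-y)/(1-x)) := by
    rw [← Real.sqrt_mul h1x.le]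
    congr 1
    field_simp
  have hlog4 : Real.log 4 = 2 * Real.log 2 := by
    rw [show (4:ℝ) = 2^2 by norm_num, Real.log_pow]; push_cast; ring
  have hlog16 : Real.log 16 = 4 * Real.log 2 := by
    rw [show (16:ℝ) = 2^4 by norm_num, Real.log_pow]; push_cast; ring
  have hqpos : (0:ℝ) < 1 + Real.sqrt ((1-y)/(1-x)) := by positivity
  have hsum_eq : Real.sqrt (1 - x) + Real.sqrt (1 - y)
      = Real.sqrt (1 - x) * (1 + Real.sqrt ((1-y)/(1-x))) := by
    rw [hq]; ring
  have hlogsum : Real.log (Real.sqrt (1 - x) + Real.sqrt (1 - y))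
      = Real.log (1-x) / 2 + Real.log (1 + Real.sqrt ((1-y)/(1-x))) := by
    rw [hsum_eq, Real.log_mul hsx.ne' hqpos.ne', Real.log_sqrt h1x.le]
  have hloginv : Real.log (1 / (1 - x)) = - Real.log (1 - x) := by
    rw [one_div, Real.log_inv]
  -- claim 2
  have hS := tsum_S ht0 ht1
  rw [h1t] at hS
  have claim2 : Real.log (1 / (1 - x)) + 2 * Real.log 2 +
        ∑' k : ℕ, poch (1/2) (k + 1) / ((k + 1 : ℝ) * (Nat.factorial (k + 1) : ℝ)) * t ^ (k + 1) =
      Real.log 16 - 2 * Real.log (Real.sqrt (1 - x) + Real.sqrt (1 - y)) := by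
    rw [hS, hloginv, hlogsum, hlog4, hlog16]
    ring
  refine ⟨?_, claim2⟩
  -- psi values
  have hpsi1 : psi 1 = -Real.eulerMascheroniConstant := by
    unfold psi
    rw [Real.hasDerivAt_Gamma_one.deriv, Real.Gamma_one, div_one]
  have hpsih : psi (1/2) = -(Real.eulerMascheroniConstant + 2 * Real.log 2) := by
    unfold psi
    rw [Real.hasDerivAt_Gamma_one_half.deriv, Real.Gamma_one_half_eq]
    have hpi : (0:ℝ) < Real.sqrt π := Real.sqrt_pos.2 Real.pi_pos
    field_simp
  -- the g expression
  have hg : g (1/2) (1/2) (1/2) x y = Real.log (1 / (1 - x)) + 2 * Real.log 2 +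
      ∑' k : ℕ, poch (1/2) (k + 1) / ((k + 1 : ℝ) * (Nat.factorial (k + 1) : ℝ)) * t ^ (k + 1) := by
    unfold g
    rw [show (1/2 + 1/2 : ℝ) = 1 by norm_num, hpsi1, hpsih]
    have hts : (∑' k : ℕ, poch (1/2) (k + 1) / ((k + 1 : ℝ) * poch 1 (k + 1)) * t ^ (k + 1))
        = ∑' k : ℕ, poch (1/2) (k + 1) / ((k + 1 : ℝ) * (Nat.factorial (k + 1) : ℝ)) * t ^ (k + 1) :=
      tsum_congr fun k => by rw [poch_one]
    rw [hts]
    ring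
  rw [hg, claim2]
  have hspos : (0:ℝ) < Real.sqrt (1 - x) + Real.sqrt (1 - y) := by positivity
  rw [Real.log_div (by norm_num) hspos.ne', hlog4, hlog16]
  ring
end
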